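/- A smooth 2π-periodic function F: S¹ → ℝ with zero mean value (∫₀^{2π} F dα = 0) has the property that the function G = F'' + F has at least four zeros in [0, 2π), provided G is not identically zero. -/

import Mathlib

open Real Set MeasureTheory intervalIntegral Filter Function
open scoped ENNReal

namespace SturmHurwitzAux

lemma tpp : (0:ℝ) < 2 * π := by positivity

lemma zero_left {G : ℝ → ℝ} (Gc : Continuous G) {a b : ℝ} (hab : a < b)
    (h : ∀ x ∈ Ioo a b, G x = 0) : G a = 0 := by
  haveI := left_nhdsWithin_Ioo_neBot hab
  have h1 : Filter.Tendsto G (nhdsWithin a (Ioo a b)) (nhds (G a)) :=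
    (Gc.continuousAt).continuousWithinAt.tendsto
  have h2 : Filter.Tendsto G (nhdsWithin a (Ioo a b)) (nhds 0) := by
    apply Filter.Tendsto.congr' _ tendsto_const_nhds
    filter_upwards [self_mem_nhdsWithin] with x hx
    exact (h x hx).symm
  exact tendsto_nhds_unique h1 h2

lemma zero_right {G : ℝ → ℝ} (Gc : Continuous G) {a b : ℝ} (hab : a < b)
    (h : ∀ x ∈ Ioo a b, G x = 0) : G b = 0 := by
  haveI := right_nhdsWithin_Ioo_neBot hab
  have h1 : Filter.Tendsto G (nhdsWithin b (Ioo a b)) (nhds (G b)) :=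
    (Gc.continuousAt).continuousWithinAt.tendsto
  have h2 : Filter.Tendsto G (nhdsWithin b (Ioo a b)) (nhds 0) := by
    apply Filter.Tendsto.congr' _ tendsto_const_nhds
    filter_upwards [self_mem_nhdsWithin] with x hx
    exact (h x hx).symm
  exact tendsto_nhds_unique h1 h2

lemma zero_of_nonneg {G : ℝ → ℝ} (Gc : Continuous G) {a b : ℝ} (hab : a < b)
    (hnn : ∀ x ∈ Icc a b, 0 ≤ G x) (hint : ∫ x in a..b, G x = 0) :
    ∀ x ∈ Icc a b, G x = 0 := by
  have key : ∀ x ∈ Ioo a b, G x = 0 := by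
    intro x hx
    by_contra hne
    have hpos : 0 < G x := lt_of_le_of_ne (hnn x (Ioo_subset_Icc_self hx)) (Ne.symm hne)
    have hae : 0 ≤ᵐ[volume.restrict (Set.uIoc a b)] G := by
      refine MeasureTheory.ae_restrict_of_forall_mem measurableSet_uIoc ?_
      intro y hy
      rw [uIoc_of_le hab.le] at hy
      exact hnn y ⟨hy.1.le, hy.2⟩
    have hP : 0 < ∫ x in a..b, G x := by
      rw [intervalIntegral.integral_pos_iff_support_of_nonneg_ae' hae
        (Gc.intervalIntegrable a b)]
      refine ⟨hab, ?_⟩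
      have hopen : IsOpen ({y | 0 < G y} ∩ Ioo a b) :=
        (isOpen_lt continuous_const Gc).inter isOpen_Ioo
      have hsub : {y | 0 < G y} ∩ Ioo a b ⊆ Function.support G ∩ Ioc a b := by
        rintro y ⟨h1, h2⟩
        exact ⟨ne_of_gt h1, h2.1, h2.2.le⟩
      calc (0:ℝ≥0∞) < volume ({y | 0 < G y} ∩ Ioo a b) :=
            hopen.measure_pos volume ⟨x, hpos, hx⟩
        _ ≤ volume (Function.support G ∩ Ioc a b) := measure_mono hsub
    rw [hint] at hP; exact lt_irrefl 0 hP
  intro x hx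
  rcases eq_or_lt_of_le hx.1 with rfl | h1
  · exact zero_left Gc hab key
  rcases eq_or_lt_of_le hx.2 with rfl | h2
  · exact zero_right Gc hab key
  exact key x ⟨h1, h2⟩

lemma periodic_zero {G : ℝ → ℝ} (Gper : Function.Periodic G (2*π)) {u : ℝ}
    (h : ∀ x ∈ Ico u (u + 2*π), G x = 0) : ∀ x, G x = 0 := by
  intro x
  have hm := toIcoMod_mem_Ico tpp u x
  have he : G (toIcoMod tpp u x) = G x := by
    have h1 : toIcoMod tpp u x = x - toIcoDiv tpp u x • (2*π) := rfl
    rw [h1, Gper.sub_zsmul_eq]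
  rw [← he]; exact h _ hm


lemma sort4 {P : ℝ → Prop} {y₁ y₂ y₃ y₄ : ℝ} (h₁ : P y₁) (h₂ : P y₂) (h₃ : P y₃) (h₄ : P y₄)
    (d12 : y₁ ≠ y₂) (d13 : y₁ ≠ y₃) (d14 : y₁ ≠ y₄) (d23 : y₂ ≠ y₃) (d24 : y₂ ≠ y₄)
    (d34 : y₃ ≠ y₄) :
    ∃ z₁ z₂ z₃ z₄, z₁ < z₂ ∧ z₂ < z₃ ∧ z₃ < z₄ ∧ P z₁ ∧ P z₂ ∧ P z₃ ∧ P z₄ := by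
  classical
  set s : Finset ℝ := {y₁, y₂, y₃, y₄} with hs
  have hP : ∀ z ∈ s, P z := by
    intro z hz
    simp only [hs, Finset.mem_insert, Finset.mem_singleton] at hz
    rcases hz with rfl | rfl | rfl | rfl <;> assumption
  have hcard : s.card = 4 := by
    simp only [hs]
    rw [Finset.card_insert_of_notMem (by simp [d12, d13, d14]),
      Finset.card_insert_of_notMem (by simp [d23, d24]),
      Finset.card_insert_of_notMem (by simp [d34]), Finset.card_singleton]
  set l := s.sort (· ≤ ·) with hl
  have hlen : l.length = 4 := by rw [hl, Finset.length_sort, hcard]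
  have hsort : l.Pairwise (· < ·) := (Finset.sortedLT_sort s).pairwise
  have hmem : ∀ z ∈ l, P z := fun z hz => hP z ((Finset.mem_sort _).1 hz)
  match l, hlen, hsort, hmem with
  | [a, b, c, d], _, hsort, hmem =>
    simp only [List.pairwise_cons, List.mem_cons, List.Pairwise.nil] at hsort
    exact ⟨a, b, c, d, by tauto, by tauto, by tauto,
      hmem a (by simp), hmem b (by simp), hmem c (by simp), hmem d (by simp)⟩

lemma window_to_goal {G : ℝ → ℝ} (Gper : Function.Periodic G (2*π))
    {x₁ x₂ x₃ x₄ : ℝ} (h12 : x₁ < x₂) (h23 : x₂ < x₃) (h34 : x₃ < x₄)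
    (hw : x₄ < x₁ + 2*π) (g1 : G x₁ = 0) (g2 : G x₂ = 0) (g3 : G x₃ = 0) (g4 : G x₄ = 0) :
    ∃ z₁ z₂ z₃ z₄ : ℝ,
      z₁ < z₂ ∧ z₂ < z₃ ∧ z₃ < z₄ ∧
      z₁ ∈ Ico 0 (2 * π) ∧ z₂ ∈ Ico 0 (2 * π) ∧
      z₃ ∈ Ico 0 (2 * π) ∧ z₄ ∈ Ico 0 (2 * π) ∧
      G z₁ = 0 ∧ G z₂ = 0 ∧ G z₃ = 0 ∧ G z₄ = 0 := by
  have key : ∀ x : ℝ, G x = 0 → (G (toIcoMod tpp 0 x) = 0 ∧ toIcoMod tpp 0 x ∈ Ico 0 (2*π)) := by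
    intro x hx
    have he : G (toIcoMod tpp 0 x) = G x := by
      have h1 : toIcoMod tpp 0 x = x - toIcoDiv tpp 0 x • (2*π) := rfl
      rw [h1, Gper.sub_zsmul_eq]
    refine ⟨he.trans hx, ?_⟩
    have := toIcoMod_mem_Ico tpp 0 x
    rwa [zero_add] at this
  have hdist : ∀ x y : ℝ, x < y → y < x + 2*π → toIcoMod tpp 0 x ≠ toIcoMod tpp 0 y := by
    intro x y hxy hyw he
    rcases (toIcoMod_eq_toIcoMod tpp).1 he with ⟨n, hn⟩
    rw [zsmul_eq_mul] at hn
    have h1 : (0:ℝ) < n := by nlinarith [pi_pos]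
    have h2 : (n:ℝ) < 1 := by nlinarith [pi_pos]
    have h1' : (0:ℤ) < n := by exact_mod_cast h1
    have h2' : (n:ℤ) < 1 := by exact_mod_cast h2
    omega
  obtain ⟨m1, mm1⟩ := key x₁ g1
  obtain ⟨m2, mm2⟩ := key x₂ g2
  obtain ⟨m3, mm3⟩ := key x₃ g3
  obtain ⟨m4, mm4⟩ := key x₄ g4
  obtain ⟨z₁, z₂, z₃, z₄, o1, o2, o3, p1, p2, p3, p4⟩ :=
    sort4 (P := fun z => z ∈ Ico 0 (2*π) ∧ G z = 0)
      ⟨mm1, m1⟩ ⟨mm2, m2⟩ ⟨mm3, m3⟩ ⟨mm4, m4⟩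
      (hdist _ _ h12 (by linarith)) (hdist _ _ (h12.trans h23) (by linarith))
      (hdist _ _ ((h12.trans h23).trans h34) (by linarith))
      (hdist _ _ h23 (by linarith)) (hdist _ _ (h23.trans h34) (by linarith))
      (hdist _ _ h34 (by linarith))
  exact ⟨z₁, z₂, z₃, z₄, o1, o2, o3, p1.1, p2.1, p3.1, p4.1, p1.2, p2.2, p3.2, p4.2⟩


lemma trig_id (u v x : ℝ) :
    Real.sin ((x-u)/2) * Real.sin ((v-x)/2) =
      (-(Real.cos ((v-u)/2))/2) + (Real.cos ((u+v)/2)/2) * Real.cos x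
        + (Real.sin ((u+v)/2)/2) * Real.sin x := by
  have e1 : Real.cos (x - (u+v)/2) =
      Real.cos ((x-u)/2) * Real.cos ((v-x)/2) + Real.sin ((x-u)/2) * Real.sin ((v-x)/2) := by
    have h := Real.cos_sub ((x-u)/2) ((v-x)/2)
    rw [show (x-u)/2 - (v-x)/2 = x - (u+v)/2 by ring] at h
    exact h
  have e2 : Real.cos ((v-u)/2) =
      Real.cos ((x-u)/2) * Real.cos ((v-x)/2) - Real.sin ((x-u)/2) * Real.sin ((v-x)/2) := by
    have h := Real.cos_add ((x-u)/2) ((v-x)/2)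
    rw [show (x-u)/2 + (v-x)/2 = (v-u)/2 by ring] at h
    exact h
  have e3 : Real.cos (x - (u+v)/2) =
      Real.cos x * Real.cos ((u+v)/2) + Real.sin x * Real.sin ((u+v)/2) :=
    Real.cos_sub x ((u+v)/2)
  linarith

lemma t_periodic (u v : ℝ) :
    Function.Periodic (fun x => Real.sin ((x-u)/2) * Real.sin ((v-x)/2)) (2*π) := by
  intro x
  simp only
  rw [show (x + 2*π - u)/2 = (x-u)/2 + π by ring, show (v - (x + 2*π))/2 = (v-x)/2 - π by ring,
    Real.sin_add_pi, Real.sin_sub_pi]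
  ring


lemma core {G : ℝ → ℝ} (Gc : Continuous G) (Gper : Function.Periodic G (2*π))
    (orth : ∀ c₀ c₁ c₂ : ℝ,
      (∫ x in (0:ℝ)..(2*π), G x * (c₀ + c₁ * Real.cos x + c₂ * Real.sin x)) = 0)
    {u v : ℝ} (huv : u < v) (hvw : v < u + 2*π) (hGu : G u = 0) (hGv : G v = 0)
    (hpos : ∀ x ∈ Icc u v, 0 ≤ G x) (hneg : ∀ x ∈ Icc v (u + 2*π), G x ≤ 0) :
    ∀ x, G x = 0 := by
  set t : ℝ → ℝ := fun x => Real.sin ((x-u)/2) * Real.sin ((v-x)/2) with ht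
  have tc : Continuous t := by fun_prop
  have hint0 : (∫ x in (0:ℝ)..(2*π), G x * t x) = 0 := by
    have hcongr : (∫ x in (0:ℝ)..(2*π), G x * t x) =
        ∫ x in (0:ℝ)..(2*π), G x * ((-(Real.cos ((v-u)/2))/2)
          + (Real.cos ((u+v)/2)/2) * Real.cos x + (Real.sin ((u+v)/2)/2) * Real.sin x) := by
      apply intervalIntegral.integral_congr
      intro x _
      rw [ht]
      simp only
      rw [trig_id]
    rw [hcongr]
    exact orth _ _ _
  have hperh : Function.Periodic (fun x => G x * t x) (2*π) := Gper.mul (t_periodic u v)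
  have hintu : (∫ x in u..(u + 2*π), G x * t x) = 0 := by
    have := hperh.intervalIntegral_add_eq u 0
    rw [zero_add] at this
    rw [this]; exact hint0
  have hnn : ∀ x ∈ Icc u (u + 2*π), 0 ≤ G x * t x := by
    intro x hx
    have hs1 : 0 ≤ Real.sin ((x-u)/2) := by
      apply Real.sin_nonneg_of_nonneg_of_le_pi
      · nlinarith [hx.1]
      · nlinarith [hx.2, pi_pos]
    rcases le_total x v with hxv | hvx
    · have hG : 0 ≤ G x := hpos x ⟨hx.1, hxv⟩
      have hs2 : 0 ≤ Real.sin ((v-x)/2) := by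
        apply Real.sin_nonneg_of_nonneg_of_le_pi
        · nlinarith
        · nlinarith [hx.1, pi_pos]
      exact mul_nonneg hG (mul_nonneg hs1 hs2)
    · have hG : G x ≤ 0 := hneg x ⟨hvx, hx.2⟩
      have hs2 : Real.sin ((v-x)/2) ≤ 0 := by
        apply Real.sin_nonpos_of_nonpos_of_neg_pi_le
        · nlinarith
        · nlinarith [hx.2, pi_pos]
      have k1 : 0 ≤ Real.sin ((x-u)/2) * -Real.sin ((v-x)/2) := mul_nonneg hs1 (by linarith)
      have k2 : 0 ≤ (-G x) * (Real.sin ((x-u)/2) * -Real.sin ((v-x)/2)) :=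
        mul_nonneg (by linarith) k1
      have k3 : G x * t x = (-G x) * (Real.sin ((x-u)/2) * -Real.sin ((v-x)/2)) := by
        rw [ht]; ring
      rw [k3]; exact k2
  have hzero : ∀ x ∈ Icc u (u + 2*π), G x * t x = 0 :=
    zero_of_nonneg (Gc.mul tc) (by linarith [pi_pos]) hnn hintu
  apply periodic_zero Gper (u := u)
  intro x hx
  have hxlt : x < u + 2*π := hx.2
  rcases eq_or_lt_of_le hx.1 with rfl | hux
  · exact hGu
  have hmem : x ∈ Icc u (u + 2*π) := ⟨hx.1, hxlt.le⟩
  have hz := hzero x hmem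
  have h1 : 0 < Real.sin ((x-u)/2) := by
    apply Real.sin_pos_of_pos_of_lt_pi
    · linarith
    · nlinarith [pi_pos]
  rcases lt_trichotomy x v with hxv | rfl | hvx
  · have h2 : 0 < Real.sin ((v-x)/2) := by
      apply Real.sin_pos_of_pos_of_lt_pi
      · linarith
      · nlinarith [pi_pos]
    have htx : t x ≠ 0 := by
      rw [ht]; exact ne_of_gt (mul_pos h1 h2)
    exact (mul_eq_zero.1 hz).resolve_right htx
  · exact hGv
  · have h2 : Real.sin ((v-x)/2) < 0 := by
      rw [show (v-x)/2 = -((x-v)/2) by ring, Real.sin_neg, neg_neg_iff_pos]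
      apply Real.sin_pos_of_pos_of_lt_pi
      · linarith
      · nlinarith [pi_pos]
    have htx : t x ≠ 0 := by
      rw [ht]; exact ne_of_lt (mul_neg_of_pos_of_neg h1 h2)
    exact (mul_eq_zero.1 hz).resolve_right htx

lemma ivt1 {G : ℝ → ℝ} (Gc : Continuous G) {c d : ℝ} (hcd : c ≤ d) (h1 : G c ≤ 0)
    (h2 : 0 ≤ G d) : ∃ z ∈ Icc c d, G z = 0 := by
  obtain ⟨z, hz, hz0⟩ := intermediate_value_Icc hcd Gc.continuousOn (mem_Icc.2 ⟨h1, h2⟩)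
  exact ⟨z, hz, hz0⟩

lemma ivt2 {G : ℝ → ℝ} (Gc : Continuous G) {c d : ℝ} (hcd : c ≤ d) (h1 : 0 ≤ G c)
    (h2 : G d ≤ 0) : ∃ z ∈ Icc c d, G z = 0 := by
  obtain ⟨z, hz, hz0⟩ := intermediate_value_Icc' hcd Gc.continuousOn (mem_Icc.2 ⟨h2, h1⟩)
  exact ⟨z, hz, hz0⟩

lemma ends_nonneg {G : ℝ → ℝ} {c d : ℝ} (hc : G c = 0) (hd : G d = 0)
    (h : ∀ x ∈ Ioo c d, 0 ≤ G x) : ∀ x ∈ Icc c d, 0 ≤ G x := by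
  intro x hx
  rcases eq_or_lt_of_le hx.1 with rfl | h1
  · exact le_of_eq hc.symm
  rcases eq_or_lt_of_le hx.2 with rfl | h2
  · exact le_of_eq hd.symm
  exact h x ⟨h1, h2⟩

lemma ends_nonpos {G : ℝ → ℝ} {c d : ℝ} (hc : G c = 0) (hd : G d = 0)
    (h : ∀ x ∈ Ioo c d, G x ≤ 0) : ∀ x ∈ Icc c d, G x ≤ 0 := by
  intro x hx
  rcases eq_or_lt_of_le hx.1 with rfl | h1
  · exact le_of_eq hc
  rcases eq_or_lt_of_le hx.2 with rfl | h2
  · exact le_of_eq hd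
  exact h x ⟨h1, h2⟩

lemma aux {G : ℝ → ℝ} (Gc : Continuous G) (Gper : Function.Periodic G (2*π))
    (orth : ∀ c₀ c₁ c₂ : ℝ,
      (∫ x in (0:ℝ)..(2*π), G x * (c₀ + c₁ * Real.cos x + c₂ * Real.sin x)) = 0)
    {p q : ℝ} (hp : p ∈ Ico 0 (2*π)) (hq : q ∈ Ico 0 (2*π)) (hpq : p < q)
    (hGp : 0 < G p) (hGq : G q < 0)
    (K : ∀ x₁ x₂ x₃ x₄ : ℝ, x₁ < x₂ → x₂ < x₃ → x₃ < x₄ → x₄ < x₁ + 2*π →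
      G x₁ = 0 → G x₂ = 0 → G x₃ = 0 → G x₄ = 0 → False) : False := by
  have hGq2 : G (q - 2*π) < 0 := by rw [Gper.sub_eq]; exact hGq
  have hq2p : q - 2*π < p := by have := hq.2; have := hp.1; linarith
  -- the last zero a before p
  set A : Set ℝ := Icc (q - 2*π) p ∩ G ⁻¹' {0} with hA
  have Acpt : IsCompact A := isCompact_Icc.inter_right (isClosed_singleton.preimage Gc)
  have Anon : A.Nonempty := by
    obtain ⟨z, hz, gz⟩ := ivt1 Gc hq2p.le hGq2.le hGp.le
    exact ⟨z, hz, gz⟩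
  set a := sSup A with ha
  have haA : a ∈ A := Acpt.sSup_mem Anon
  have hGa : G a = 0 := haA.2
  have haub : ∀ y ∈ A, y ≤ a := fun y hy => le_csSup Acpt.bddAbove hy
  have hap : a < p := lt_of_le_of_ne haA.1.2 (fun h => by rw [h] at hGa; linarith)
  have hqa : q - 2*π < a := lt_of_le_of_ne haA.1.1 (fun h => by rw [← h] at hGa; linarith)
  have hApos : ∀ x, a < x → x ≤ p → 0 < G x := by
    intro x h1 h2
    by_contra hle
    push_neg at hle
    obtain ⟨w, hw, gw⟩ := ivt1 Gc h2 hle hGp.le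
    have : w ∈ A := ⟨⟨le_trans hqa.le (le_trans h1.le hw.1), hw.2⟩, gw⟩
    have := haub w this
    linarith [hw.1]
  -- the first zero b after p
  set B : Set ℝ := Icc p q ∩ G ⁻¹' {0} with hB
  have Bcpt : IsCompact B := isCompact_Icc.inter_right (isClosed_singleton.preimage Gc)
  have Bnon : B.Nonempty := by
    obtain ⟨z, hz, gz⟩ := ivt2 Gc hpq.le hGp.le hGq.le
    exact ⟨z, hz, gz⟩
  set b := sInf B with hb
  have hbB : b ∈ B := Bcpt.sInf_mem Bnon
  have hGb : G b = 0 := hbB.2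
  have hblb : ∀ y ∈ B, b ≤ y := fun y hy => csInf_le Bcpt.bddBelow hy
  have hpb : p < b := lt_of_le_of_ne hbB.1.1 (fun h => by rw [← h] at hGb; linarith)
  have hbq : b < q := lt_of_le_of_ne hbB.1.2 (fun h => by rw [h] at hGb; linarith)
  have hBpos : ∀ x, p ≤ x → x < b → 0 < G x := by
    intro x h1 h2
    by_contra hle
    push_neg at hle
    obtain ⟨w, hw, gw⟩ := ivt2 Gc h1 hGp.le hle
    have : w ∈ B := ⟨⟨hw.1, le_trans hw.2 (le_trans h2.le hbB.1.2)⟩, gw⟩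
    have := hblb w this
    linarith [hw.2]
  have hIab : ∀ x ∈ Ioo a b, 0 < G x := by
    intro x hx
    rcases le_or_gt x p with h | h
    · exact hApos x hx.1 h
    · exact hBpos x h.le hx.2
  have hab : a < b := hap.trans hpb
  have hqa2 : q < a + 2*π := by linarith
  have hba2 : b < a + 2*π := hbq.trans hqa2
  have hGa2 : G (a + 2*π) = 0 := by rw [Gper a]; exact hGa
  by_cases hr : ∃ r ∈ Ioo b (a + 2*π), 0 < G r
  · obtain ⟨r, hrm, hGr⟩ := hr
    rcases lt_trichotomy r q with hrq | rfl | hqr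
    · -- r < q : zero z₃ in (r,q)
      obtain ⟨z₃, hz₃, gz₃⟩ := ivt2 Gc hrq.le hGr.le hGq.le
      have hrz : r < z₃ := lt_of_le_of_ne hz₃.1 (fun h => by rw [← h] at gz₃; linarith)
      have hzq : z₃ < q := lt_of_le_of_ne hz₃.2 (fun h => by rw [h] at gz₃; linarith)
      have hbz : b < z₃ := hrm.1.trans hrz
      have hza : z₃ < a + 2*π := hzq.trans hqa2
      have c1 : ∀ y ∈ Ioo b z₃, 0 ≤ G y := by
        intro y hy
        by_contra hyn
        push_neg at hyn
        rcases le_total y r with h' | h'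
        · obtain ⟨w, hw, gw⟩ := ivt1 Gc h' hyn.le hGr.le
          exact K a b w z₃ hab (lt_of_lt_of_le hy.1 hw.1) (lt_of_le_of_lt hw.2 hrz) hza
            hGa hGb gw gz₃
        · obtain ⟨w, hw, gw⟩ := ivt2 Gc h' hGr.le hyn.le
          exact K a b w z₃ hab (hrm.1.trans_le hw.1) (lt_of_le_of_lt hw.2 hy.2) hza
            hGa hGb gw gz₃
      have c2 : ∀ y ∈ Ioo z₃ (a + 2*π), G y ≤ 0 := by
        intro y hy
        by_contra hyn
        push_neg at hyn
        rcases lt_trichotomy y q with h' | rfl | h'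
        · obtain ⟨w, hw, gw⟩ := ivt2 Gc h'.le hyn.le hGq.le
          exact K a b z₃ w hab hbz (hy.1.trans_le hw.1) (lt_of_le_of_lt hw.2 hqa2)
            hGa hGb gz₃ gw
        · linarith
        · obtain ⟨w, hw, gw⟩ := ivt1 Gc h'.le hGq.le hyn.le
          exact K a b z₃ w hab hbz (hzq.trans_le hw.1) (lt_of_le_of_lt hw.2 hy.2)
            hGa hGb gz₃ gw
      have hposIcc : ∀ x ∈ Icc a z₃, 0 ≤ G x := by
        apply ends_nonneg hGa gz₃
        intro x hx
        rcases lt_trichotomy x b with h' | rfl | h'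
        · exact (hIab x ⟨hx.1, h'⟩).le
        · exact le_of_eq hGb.symm
        · exact c1 x ⟨h', hx.2⟩
      have hnegIcc : ∀ x ∈ Icc z₃ (a + 2*π), G x ≤ 0 := ends_nonpos gz₃ hGa2 c2
      have := core Gc Gper orth (hab.trans hbz) hza hGa gz₃ hposIcc hnegIcc p
      linarith
    · linarith
    · -- q < r : zero z₃ in (q,r)
      obtain ⟨z₃, hz₃, gz₃⟩ := ivt1 Gc hqr.le hGq.le hGr.le
      have hqz : q < z₃ := lt_of_le_of_ne hz₃.1 (fun h => by rw [← h] at gz₃; linarith)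
      have hzr : z₃ < r := lt_of_le_of_ne hz₃.2 (fun h => by rw [h] at gz₃; linarith)
      have hbz : b < z₃ := hbq.trans hqz
      have hza : z₃ < a + 2*π := hzr.trans hrm.2
      have c1 : ∀ y ∈ Ioo b z₃, G y ≤ 0 := by
        intro y hy
        by_contra hyn
        push_neg at hyn
        rcases lt_trichotomy y q with h' | rfl | h'
        · obtain ⟨w, hw, gw⟩ := ivt2 Gc h'.le hyn.le hGq.le
          exact K a b w z₃ hab (hy.1.trans_le hw.1) (lt_of_le_of_lt hw.2 hqz) hza
            hGa hGb gw gz₃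
        · linarith
        · obtain ⟨w, hw, gw⟩ := ivt1 Gc h'.le hGq.le hyn.le
          exact K a b w z₃ hab (hbq.trans_le hw.1) (lt_of_le_of_lt hw.2 hy.2) hza
            hGa hGb gw gz₃
      have c2 : ∀ y ∈ Ioo z₃ (a + 2*π), 0 ≤ G y := by
        intro y hy
        by_contra hyn
        push_neg at hyn
        rcases le_total y r with h' | h'
        · obtain ⟨w, hw, gw⟩ := ivt1 Gc h' hyn.le hGr.le
          exact K a b z₃ w hab hbz (hy.1.trans_le hw.1) (lt_of_le_of_lt hw.2 hrm.2)
            hGa hGb gz₃ gw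
        · obtain ⟨w, hw, gw⟩ := ivt2 Gc h' hGr.le hyn.le
          exact K a b z₃ w hab hbz (hzr.trans_le hw.1) (lt_of_le_of_lt hw.2 hy.2)
            hGa hGb gz₃ gw
      have hGb2 : G (b + 2*π) = 0 := by rw [Gper b]; exact hGb
      have hposIcc : ∀ x ∈ Icc z₃ (b + 2*π), 0 ≤ G x := by
        apply ends_nonneg gz₃ hGb2
        intro x hx
        rcases lt_trichotomy x (a + 2*π) with h' | rfl | h'
        · exact c2 x ⟨hx.1, h'⟩
        · exact le_of_eq hGa2.symm
        · have hx2 : x - 2*π ∈ Icc a b := ⟨by linarith [hx.1], by linarith [hx.2]⟩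
          have hGx : G x = G (x - 2*π) := (Gper.sub_eq x).symm
          rw [hGx]
          exact ends_nonneg hGa hGb (fun y hy => (hIab y hy).le) _ hx2
      have hnegIcc : ∀ x ∈ Icc (b + 2*π) (z₃ + 2*π), G x ≤ 0 := by
        intro x hx
        have hx2 : x - 2*π ∈ Icc b z₃ := ⟨by linarith [hx.1], by linarith [hx.2]⟩
        have hGx : G x = G (x - 2*π) := (Gper.sub_eq x).symm
        rw [hGx]
        exact ends_nonpos hGb gz₃ c1 _ hx2
      have := core Gc Gper orth (by linarith : z₃ < b + 2*π)
        (by linarith : b + 2*π < z₃ + 2*π) gz₃ hGb2 hposIcc hnegIcc p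
      linarith
  · push_neg at hr
    have hposIcc : ∀ x ∈ Icc a b, 0 ≤ G x :=
      ends_nonneg hGa hGb (fun y hy => (hIab y hy).le)
    have hnegIcc : ∀ x ∈ Icc b (a + 2*π), G x ≤ 0 := ends_nonpos hGb hGa2 hr
    have := core Gc Gper orth hab hba2 hGa hGb hposIcc hnegIcc p
    linarith


end SturmHurwitzAux

/-- If `F : ℝ → ℝ` is a C² function, `2π`-periodic with zero mean,
then `G = F'' + F`, if not identically zero, has at least four zeros
in `[0, 2π)`. -/
theorem four_zeros_of_Fpp_plus_F
    (F : ℝ → ℝ) (hF : ContDiff ℝ 2 F)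
    (hper : Function.Periodic F (2 * π))
    (hmean : ∫ α in (0:ℝ)..(2 * π), F α = 0)
    (G : ℝ → ℝ) (hG : ∀ α, G α = deriv (deriv F) α + F α)
    (hG0 : ¬ ∀ α, G α = 0) :
    ∃ x₁ x₂ x₃ x₄ : ℝ,
      x₁ < x₂ ∧ x₂ < x₃ ∧ x₃ < x₄ ∧
      x₁ ∈ Ico 0 (2 * π) ∧ x₂ ∈ Ico 0 (2 * π) ∧
      x₃ ∈ Ico 0 (2 * π) ∧ x₄ ∈ Ico 0 (2 * π) ∧
      G x₁ = 0 ∧ G x₂ = 0 ∧ G x₃ = 0 ∧ G x₄ = 0 := by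
  open SturmHurwitzAux in
  -- regularity
  have h2 : ((1:WithTop ℕ∞)+1) = 2 := by norm_num
  have hmp := contDiff_succ_iff_deriv.mp (h2 ▸ hF)
  have hd1 : Differentiable ℝ F := hmp.1
  have hF' : ContDiff ℝ 1 (deriv F) := hmp.2.2
  have hd2 : Differentiable ℝ (deriv F) := (contDiff_one_iff_deriv.mp hF').1
  have hc2 : Continuous (deriv (deriv F)) := (contDiff_one_iff_deriv.mp hF').2
  have hc1 : Continuous (deriv F) := hd2.continuous
  have hFc : Continuous F := hd1.continuous
  have Gc : Continuous G := by
    have : G = fun α => deriv (deriv F) α + F α := funext hG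
    rw [this]; exact hc2.add hFc
  -- periodicity
  have hperd : ∀ (f : ℝ → ℝ), Function.Periodic f (2*π) → Function.Periodic (deriv f) (2*π) := by
    intro f hf x
    have he : (fun y => f (y + 2*π)) = f := funext hf
    rw [← deriv_comp_add_const f (2*π) x, he]
  have hperF' : Function.Periodic (deriv F) (2*π) := hperd F hper
  have hperF'' : Function.Periodic (deriv (deriv F)) (2*π) := hperd _ hperF'
  have Gper : Function.Periodic G (2*π) := by
    intro x; rw [hG, hG, hperF'' x, hper x]
  -- the three vanishing Fourier coefficients
  have hF20 : F (2*π) = F 0 := by have := hper 0; rwa [zero_add] at this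
  have hd20 : deriv F (2*π) = deriv F 0 := by have := hperF' 0; rwa [zero_add] at this
  have i2 : (∫ x in (0:ℝ)..(2*π), deriv (deriv F) x) = 0 := by
    rw [intervalIntegral.integral_deriv_eq_sub (fun x _ => hd2 x)
      (hc2.intervalIntegrable _ _), hd20, sub_self]
  have iG : (∫ x in (0:ℝ)..(2*π), G x) = 0 := by
    have : (∫ x in (0:ℝ)..(2*π), G x)
        = (∫ x in (0:ℝ)..(2*π), deriv (deriv F) x) + ∫ x in (0:ℝ)..(2*π), F x := by
      rw [← intervalIntegral.integral_add (hc2.intervalIntegrable _ _)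
        (hFc.intervalIntegrable _ _)]
      exact intervalIntegral.integral_congr (fun x _ => hG x)
    rw [this, i2, hmean, add_zero]
  have P1 : (∫ x in (0:ℝ)..(2*π), Real.cos x * deriv (deriv F) x)
      = Real.cos (2*π) * deriv F (2*π) - Real.cos 0 * deriv F 0
        - ∫ x in (0:ℝ)..(2*π), -Real.sin x * deriv F x := by
    apply intervalIntegral.integral_mul_deriv_eq_deriv_mul
      (fun x _ => Real.hasDerivAt_cos x) (fun x _ => (hd2 x).hasDerivAt)
      ((Real.continuous_sin.neg).intervalIntegrable _ _) (hc2.intervalIntegrable _ _)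
  have P2 : (∫ x in (0:ℝ)..(2*π), Real.sin x * deriv F x)
      = Real.sin (2*π) * F (2*π) - Real.sin 0 * F 0
        - ∫ x in (0:ℝ)..(2*π), Real.cos x * F x := by
    apply intervalIntegral.integral_mul_deriv_eq_deriv_mul
      (fun x _ => Real.hasDerivAt_sin x) (fun x _ => (hd1 x).hasDerivAt)
      (Real.continuous_cos.intervalIntegrable _ _) (hc1.intervalIntegrable _ _)
  have E1 : (∫ x in (0:ℝ)..(2*π), -Real.sin x * deriv F x)
      = -∫ x in (0:ℝ)..(2*π), Real.sin x * deriv F x := by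
    rw [← intervalIntegral.integral_neg]
    exact intervalIntegral.integral_congr (fun x _ => by ring)
  have ic : (∫ x in (0:ℝ)..(2*π), G x * Real.cos x) = 0 := by
    have hsplit : (∫ x in (0:ℝ)..(2*π), G x * Real.cos x)
        = (∫ x in (0:ℝ)..(2*π), Real.cos x * deriv (deriv F) x)
          + ∫ x in (0:ℝ)..(2*π), Real.cos x * F x := by
      rw [← intervalIntegral.integral_add (f := fun x => Real.cos x * deriv (deriv F) x)
        (g := fun x => Real.cos x * F x)
        ((Real.continuous_cos.mul hc2).intervalIntegrable _ _)
        ((Real.continuous_cos.mul hFc).intervalIntegrable _ _)]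
      exact intervalIntegral.integral_congr (fun x _ => by rw [hG x]; ring)
    rw [hsplit, P1, E1, P2]
    simp [Real.cos_two_pi, Real.sin_two_pi, hd20, hF20]
  have P3 : (∫ x in (0:ℝ)..(2*π), Real.sin x * deriv (deriv F) x)
      = Real.sin (2*π) * deriv F (2*π) - Real.sin 0 * deriv F 0
        - ∫ x in (0:ℝ)..(2*π), Real.cos x * deriv F x := by
    apply intervalIntegral.integral_mul_deriv_eq_deriv_mul
      (fun x _ => Real.hasDerivAt_sin x) (fun x _ => (hd2 x).hasDerivAt)
      (Real.continuous_cos.intervalIntegrable _ _) (hc2.intervalIntegrable _ _)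
  have P4 : (∫ x in (0:ℝ)..(2*π), Real.cos x * deriv F x)
      = Real.cos (2*π) * F (2*π) - Real.cos 0 * F 0
        - ∫ x in (0:ℝ)..(2*π), -Real.sin x * F x := by
    apply intervalIntegral.integral_mul_deriv_eq_deriv_mul
      (fun x _ => Real.hasDerivAt_cos x) (fun x _ => (hd1 x).hasDerivAt)
      ((Real.continuous_sin.neg).intervalIntegrable _ _) (hc1.intervalIntegrable _ _)
  have E2 : (∫ x in (0:ℝ)..(2*π), -Real.sin x * F x)
      = -∫ x in (0:ℝ)..(2*π), Real.sin x * F x := by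
    rw [← intervalIntegral.integral_neg]
    exact intervalIntegral.integral_congr (fun x _ => by ring)
  have is : (∫ x in (0:ℝ)..(2*π), G x * Real.sin x) = 0 := by
    have hsplit : (∫ x in (0:ℝ)..(2*π), G x * Real.sin x)
        = (∫ x in (0:ℝ)..(2*π), Real.sin x * deriv (deriv F) x)
          + ∫ x in (0:ℝ)..(2*π), Real.sin x * F x := by
      rw [← intervalIntegral.integral_add (f := fun x => Real.sin x * deriv (deriv F) x)
        (g := fun x => Real.sin x * F x)
        ((Real.continuous_sin.mul hc2).intervalIntegrable _ _)
        ((Real.continuous_sin.mul hFc).intervalIntegrable _ _)]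
      exact intervalIntegral.integral_congr (fun x _ => by rw [hG x]; ring)
    rw [hsplit, P3, P4, E2]
    simp [Real.cos_two_pi, Real.sin_two_pi, hF20]
  -- orthogonality to all trig polys of degree ≤ 1
  have orth : ∀ c₀ c₁ c₂ : ℝ,
      (∫ x in (0:ℝ)..(2*π), G x * (c₀ + c₁ * Real.cos x + c₂ * Real.sin x)) = 0 := by
    intro c₀ c₁ c₂
    have hre : (∫ x in (0:ℝ)..(2*π), G x * (c₀ + c₁ * Real.cos x + c₂ * Real.sin x))
        = (∫ x in (0:ℝ)..(2*π),
            (c₀ * G x + c₁ * (G x * Real.cos x)) + c₂ * (G x * Real.sin x)) :=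
      intervalIntegral.integral_congr (fun x _ => by ring)
    have k1 : IntervalIntegrable (fun x => c₀ * G x) volume 0 (2*π) :=
      (continuous_const.mul Gc).intervalIntegrable _ _
    have k2 : IntervalIntegrable (fun x => c₁ * (G x * Real.cos x)) volume 0 (2*π) :=
      (continuous_const.mul (Gc.mul Real.continuous_cos)).intervalIntegrable _ _
    have k3 : IntervalIntegrable (fun x => c₂ * (G x * Real.sin x)) volume 0 (2*π) :=
      (continuous_const.mul (Gc.mul Real.continuous_sin)).intervalIntegrable _ _
    rw [hre, intervalIntegral.integral_add (k1.add k2) k3,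
      intervalIntegral.integral_add k1 k2,
      intervalIntegral.integral_const_mul, intervalIntegral.integral_const_mul,
      intervalIntegral.integral_const_mul, iG, ic, is]
    ring
  -- existence of positive / negative points in [0, 2π)
  have hex : ∀ (H : ℝ → ℝ), Continuous H → Function.Periodic H (2*π) →
      (∫ x in (0:ℝ)..(2*π), H x) = 0 → (¬ ∀ α, H α = 0) →
      ∃ p ∈ Ico 0 (2*π), 0 < H p := by
    intro H Hc Hper Hint H0
    by_contra hno
    push_neg at hno
    have hno' : ∀ x ∈ Icc 0 (2*π), 0 ≤ -H x := by
      intro x hx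
      rcases eq_or_lt_of_le hx.2 with heq | h2
      · have hH : H x = H 0 := by rw [heq]; have := Hper 0; rwa [zero_add] at this
        rw [hH]
        simp only [neg_nonneg]
        exact hno 0 ⟨le_refl 0, by positivity⟩
      · simp only [neg_nonneg]
        exact hno x ⟨hx.1, h2⟩
    have hNint : (∫ x in (0:ℝ)..(2*π), -H x) = 0 := by
      rw [intervalIntegral.integral_neg, Hint, neg_zero]
    have hzero := SturmHurwitzAux.zero_of_nonneg Hc.neg (by positivity) hno' hNint
    apply H0
    apply SturmHurwitzAux.periodic_zero Hper (u := 0)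
    intro x hx
    have := hzero x ⟨hx.1, by rw [zero_add] at hx; exact hx.2.le⟩
    linarith [this, show (-H) x = -H x from rfl]
  obtain ⟨p, hp, hGp⟩ := hex G Gc Gper iG hG0
  have Gnegper : Function.Periodic (fun x => -G x) (2*π) := by
    intro x; simp only; rw [Gper x]
  have hGneg0 : ¬ ∀ α, -G α = 0 := by
    intro h; apply hG0; intro α; have := h α; linarith
  have iGneg : (∫ x in (0:ℝ)..(2*π), -G x) = 0 := by
    rw [intervalIntegral.integral_neg, iG, neg_zero]
  obtain ⟨q, hq, hGq'⟩ := hex (fun x => -G x) Gc.neg Gnegper iGneg hGneg0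
  have hGq : G q < 0 := by linarith [hGq']
  by_contra hcon
  have K : ∀ x₁ x₂ x₃ x₄ : ℝ, x₁ < x₂ → x₂ < x₃ → x₃ < x₄ → x₄ < x₁ + 2*π →
      G x₁ = 0 → G x₂ = 0 → G x₃ = 0 → G x₄ = 0 → False := by
    intro x₁ x₂ x₃ x₄ o1 o2 o3 ow g1 g2 g3 g4
    exact hcon (SturmHurwitzAux.window_to_goal Gper o1 o2 o3 ow g1 g2 g3 g4)
  rcases lt_trichotomy p q with hpq | rfl | hqp
  · exact SturmHurwitzAux.aux Gc Gper orth hp hq hpq hGp hGq K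
  · linarith
  · have orthneg : ∀ c₀ c₁ c₂ : ℝ,
        (∫ x in (0:ℝ)..(2*π), (fun x => -G x) x * (c₀ + c₁ * Real.cos x + c₂ * Real.sin x)) = 0 := by
      intro c₀ c₁ c₂
      have hre : (∫ x in (0:ℝ)..(2*π), (fun x => -G x) x * (c₀ + c₁ * Real.cos x + c₂ * Real.sin x))
          = ∫ x in (0:ℝ)..(2*π), -(G x * (c₀ + c₁ * Real.cos x + c₂ * Real.sin x)) :=
        intervalIntegral.integral_congr (fun x _ => by simp only; ring)
      rw [hre, intervalIntegral.integral_neg, orth, neg_zero]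
    have hGqpos : 0 < (fun x => -G x) q := by simpa using hGq'
    have hGpneg : (fun x => -G x) p < 0 := by simp only; linarith
    refine SturmHurwitzAux.aux Gc.neg Gnegper orthneg hq hp hqp hGqpos hGpneg ?_
    intro x₁ x₂ x₃ x₄ o1 o2 o3 ow g1 g2 g3 g4
    exact K x₁ x₂ x₃ x₄ o1 o2 o3 ow (by simpa using g1) (by simpa using g2)
      (by simpa using g3) (by simpa using g4)
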